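/- For every n ≥ 1 and m ≥ 0, the identity ∑_{k=0}^{n−1} C(n,k) · C(n,k+1) · C(k,m) = C(n,m) · C(2n−m, n+1) holds. -/

import Mathlib

/-- For every `n ≥ 1` and `m ≥ 0`,
`∑_{k=0}^{n-1} C(n,k) C(n,k+1) C(k,m) = C(n,m) C(2n-m, n+1)`. -/
theorem narayana_sum_identity (n m : ℕ) (hn : 1 ≤ n) :
    ∑ k ∈ Finset.range n, Nat.choose n k * Nat.choose n (k + 1) * Nat.choose k m =
      Nat.choose n m * Nat.choose (2 * n - m) (n + 1) := by
  rcases le_or_gt n m with h | h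
  · have hL : ∀ k ∈ Finset.range n,
        Nat.choose n k * Nat.choose n (k + 1) * Nat.choose k m = 0 := by
      intro k hk
      rw [Nat.choose_eq_zero_of_lt (lt_of_lt_of_le (Finset.mem_range.mp hk) h), mul_zero]
    rw [Finset.sum_eq_zero hL]
    rcases eq_or_lt_of_le h with rfl | h'
    · rw [show 2 * n - n = n by omega, Nat.choose_eq_zero_of_lt (Nat.lt_succ_self n), mul_zero]
    · rw [Nat.choose_eq_zero_of_lt h', zero_mul]
  · -- m < n
    have key : ∑ k ∈ Finset.range n,
        Nat.choose n k * Nat.choose n (k + 1) * Nat.choose k m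
        = ∑ k ∈ Finset.Ico m n, Nat.choose n k * Nat.choose n (k + 1) * Nat.choose k m := by
      rw [Finset.range_eq_Ico]
      refine (Finset.sum_subset (Finset.Ico_subset_Ico (Nat.zero_le _) le_rfl) ?_).symm
      intro x hx hx'
      simp only [Finset.mem_Ico] at hx hx'
      rw [Nat.choose_eq_zero_of_lt (show x < m by omega), mul_zero]
    rw [key, Finset.sum_Ico_eq_sum_range]
    have step : ∀ j ∈ Finset.range (n - m),
        Nat.choose n (m + j) * Nat.choose n (m + j + 1) * Nat.choose (m + j) m
        = Nat.choose n m * (Nat.choose (n - m) j * Nat.choose n (n - m - 1 - j)) := by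
      intro j hj
      have hj' : j < n - m := Finset.mem_range.mp hj
      have h1 : Nat.choose n (m + j) * Nat.choose (m + j) m
          = Nat.choose n m * Nat.choose (n - m) j := by
        have := Nat.choose_mul (n := n) (k := m + j) (s := m) (by omega)
        rwa [Nat.add_sub_cancel_left] at this
      have h2 : Nat.choose n (m + j + 1) = Nat.choose n (n - m - 1 - j) := by
        rw [← Nat.choose_symm (n := n) (k := m + j + 1) (by omega)]
        congr 1; omega
      calc Nat.choose n (m + j) * Nat.choose n (m + j + 1) * Nat.choose (m + j) m
          = (Nat.choose n (m + j) * Nat.choose (m + j) m) * Nat.choose n (m + j + 1) := by ring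
        _ = Nat.choose n m * (Nat.choose (n - m) j * Nat.choose n (n - m - 1 - j)) := by
            rw [h1, h2]; ring
    rw [Finset.sum_congr rfl step, ← Finset.mul_sum]
    congr 1
    have hv := Nat.add_choose_eq (n - m) n (n - m - 1)
    rw [Finset.Nat.sum_antidiagonal_eq_sum_range_succ_mk] at hv
    rw [show (n - m - 1).succ = n - m by omega] at hv
    rw [← hv]
    have h3 : n - m + n = 2 * n - m := by omega
    rw [h3]
    exact (Nat.choose_symm_of_eq_add (by omega)).symm
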